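/- (Second Rule of Trace-2 Matrices) Let A and B be the z-matrix and w-matrix of a singular sequence. Assume the trace of A equals 2, a_{ii} = a_{jj} = 1 for some i ≠ j, and a_{kl} = 0 for all k ≠ l with {k,l} ≠ {i,j}. Then b_{ik} = b_{jk} = 0 for every k ∈ {1,…,n}. If moreover m_i^3 + m_j^3 ≠ 0, then the trace of B is not equal to n − 3. The same statement holds with the roles of A and B (and of a and b) interchanged. -/

import Mathlib

open Filter Finset

/-- `Zq δ z k l` is the quantity `Z_{lk} = δ_{kl}^3 · (z_k − z_l)`
(and, applied to `w`, the quantity `W_{lk}`). -/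
noncomputable def Zq {n : ℕ} (δ : Fin n → Fin n → ℂ) (z : Fin n → ℂ) (k l : Fin n) : ℂ :=
  δ k l ^ 3 * (z k - z l)

/-- A singular sequence of normalized central configurations for the masses `m`:
sequences `z^{(N)}, w^{(N)} ∈ ℂ^n`, symmetric `δ^{(N)}`, and positive reals `ε_N → 0`
such that every term satisfies the central configuration equations
`z_k = ∑_{l≠k} m_l Z_{lk}`, `w_k = ∑_{l≠k} m_l W_{lk}`, the normalization
`δ_{kl}^2 z_{kl} w_{kl} = 1` (`k ≠ l`), the maximum of the `|z_k|, |Z_{kl}|`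
(resp. `|w_k|, |W_{kl}|`) equals `ε_N^{-2}`, and all the sequences
`ε_N^2 z_k, ε_N^2 w_k, ε_N^2 Z_{kl}, ε_N^2 W_{kl}` converge. -/
structure SingularSeq (n : ℕ) (m : Fin n → ℂ) : Type where
  z : ℕ → Fin n → ℂ
  w : ℕ → Fin n → ℂ
  delta : ℕ → Fin n → Fin n → ℂ
  eps : ℕ → ℝ
  eps_pos : ∀ N, 0 < eps N
  eps_lim : Tendsto eps atTop (nhds 0)
  delta_symm : ∀ N, ∀ k l : Fin n, delta N k l = delta N l k
  eq_z : ∀ N, ∀ k : Fin n, z N k = ∑ l ∈ univ.erase k, m l * Zq (delta N) (z N) k l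
  eq_w : ∀ N, ∀ k : Fin n, w N k = ∑ l ∈ univ.erase k, m l * Zq (delta N) (w N) k l
  normalize : ∀ N, ∀ k l : Fin n, k ≠ l →
    delta N k l ^ 2 * (z N l - z N k) * (w N l - w N k) = 1
  maxZ : ∀ N, IsGreatest
      ({x : ℝ | ∃ k, x = ‖z N k‖} ∪
        {x : ℝ | ∃ k l, k ≠ l ∧ x = ‖Zq (delta N) (z N) k l‖})
      (eps N ^ (-2 : ℤ))
  maxW : ∀ N, IsGreatest
      ({x : ℝ | ∃ k, x = ‖w N k‖} ∪
        {x : ℝ | ∃ k l, k ≠ l ∧ x = ‖Zq (delta N) (w N) k l‖})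
      (eps N ^ (-2 : ℤ))
  conv_z : ∀ k : Fin n, ∃ L : ℂ,
    Tendsto (fun N => (eps N : ℂ) ^ 2 * z N k) atTop (nhds L)
  conv_w : ∀ k : Fin n, ∃ L : ℂ,
    Tendsto (fun N => (eps N : ℂ) ^ 2 * w N k) atTop (nhds L)
  conv_Z : ∀ k l : Fin n, k ≠ l → ∃ L : ℂ,
    Tendsto (fun N => (eps N : ℂ) ^ 2 * Zq (delta N) (z N) k l) atTop (nhds L)
  conv_W : ∀ k l : Fin n, k ≠ l → ∃ L : ℂ,
    Tendsto (fun N => (eps N : ℂ) ^ 2 * Zq (delta N) (w N) k l) atTop (nhds L)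

/-- `A` and `B` are the z-matrix and the w-matrix of the singular sequence `S`:
symmetric `{0,1}`-matrices whose entries record which of the (convergent) sequences
`ε_N^2 z_i`, `ε_N^2 Z_{ij}` (resp. `ε_N^2 w_i`, `ε_N^2 W_{ij}`) have nonzero limit. -/
structure IsZWMatrices {n : ℕ} {m : Fin n → ℂ} (S : SingularSeq n m)
    (A B : Matrix (Fin n) (Fin n) ℕ) : Prop where
  zeroOne_A : ∀ i j, A i j = 0 ∨ A i j = 1
  symm_A : ∀ i j, A i j = A j i
  zeroOne_B : ∀ i j, B i j = 0 ∨ B i j = 1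
  symm_B : ∀ i j, B i j = B j i
  diag_A : ∀ i, A i i = 1 ↔
    ¬ Tendsto (fun N => (S.eps N : ℂ) ^ 2 * S.z N i) atTop (nhds 0)
  off_A : ∀ i j, i ≠ j → (A i j = 1 ↔
    ¬ Tendsto (fun N => (S.eps N : ℂ) ^ 2 * Zq (S.delta N) (S.z N) i j) atTop (nhds 0))
  diag_B : ∀ i, B i i = 1 ↔
    ¬ Tendsto (fun N => (S.eps N : ℂ) ^ 2 * S.w N i) atTop (nhds 0)
  off_B : ∀ i j, i ≠ j → (B i j = 1 ↔
    ¬ Tendsto (fun N => (S.eps N : ℂ) ^ 2 * Zq (S.delta N) (S.w N) i j) atTop (nhds 0))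

noncomputable def Complex.abs : AbsoluteValue ℂ ℝ where
  toFun z := ‖z‖
  map_mul' := norm_mul
  nonneg' := norm_nonneg
  eq_zero' _ := norm_eq_zero
  add_le' := norm_add_le

lemma Complex.abs_apply (z : ℂ) : Complex.abs z = ‖z‖ := rfl

lemma Complex.norm_eq_abs (z : ℂ) : ‖z‖ = Complex.abs z := rfl

lemma Complex.continuous_abs : Continuous Complex.abs := continuous_norm

lemma Complex.abs_ofReal (r : ℝ) : Complex.abs (r : ℂ) = |r| := Complex.norm_real r

noncomputable def SingularSeq.swap {n : ℕ} {m : Fin n → ℂ} (S : SingularSeq n m) :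
    SingularSeq n m where
  z := S.w
  w := S.z
  delta := S.delta
  eps := S.eps
  eps_pos := S.eps_pos
  eps_lim := S.eps_lim
  delta_symm := S.delta_symm
  eq_z := S.eq_w
  eq_w := S.eq_z
  normalize := fun N k l h => by rw [mul_right_comm]; exact S.normalize N k l h
  maxZ := S.maxW
  maxW := S.maxZ
  conv_z := S.conv_w
  conv_w := S.conv_z
  conv_Z := S.conv_W
  conv_W := S.conv_Z

lemma IsZWMatrices.swap {n : ℕ} {m : Fin n → ℂ} {S : SingularSeq n m}
    {A B : Matrix (Fin n) (Fin n) ℕ} (h : IsZWMatrices S A B) :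
    IsZWMatrices S.swap B A where
  zeroOne_A := h.zeroOne_B
  symm_A := h.symm_B
  zeroOne_B := h.zeroOne_A
  symm_B := h.symm_A
  diag_A := h.diag_B
  off_A := h.off_B
  diag_B := h.diag_A
  off_B := h.off_A

lemma row_limits {n : ℕ} {m : Fin n → ℂ}
    (hm : ∀ I : Finset (Fin n), I.Nonempty → ∑ k ∈ I, m k ≠ 0)
    (S : SingularSeq n m) (A B : Matrix (Fin n) (Fin n) ℕ)
    (hAB : IsZWMatrices S A B) (i j : Fin n) (hij : i ≠ j)
    (htr : Matrix.trace A = 2) (hAii : A i i = 1) (hAjj : A j j = 1)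
    (hoff : ∀ k l : Fin n, k ≠ l → ¬ ((k = i ∧ l = j) ∨ (k = j ∧ l = i)) → A k l = 0) :
    (∀ l, l ≠ i → Tendsto (fun N => (S.eps N : ℂ)^2 * Zq (S.delta N) (S.w N) i l) atTop (nhds 0))
    ∧ Tendsto (fun N => (S.eps N : ℂ)^2 * S.w N i) atTop (nhds 0) := by
  classical
  -- limits
  choose Lz hLz using S.conv_z
  choose Lw hLw using S.conv_w
  have convZ' : ∀ k l : Fin n, ∃ L : ℂ, k ≠ l →
      Tendsto (fun N => (S.eps N : ℂ)^2 * Zq (S.delta N) (S.z N) k l) atTop (nhds L) := by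
    intro k l
    by_cases h : k ≠ l
    · exact ⟨(S.conv_Z k l h).choose, fun _ => (S.conv_Z k l h).choose_spec⟩
    · exact ⟨0, fun h' => absurd h' h⟩
  choose LZ hLZ using convZ'
  have convW' : ∀ k l : Fin n, ∃ L : ℂ, k ≠ l →
      Tendsto (fun N => (S.eps N : ℂ)^2 * Zq (S.delta N) (S.w N) k l) atTop (nhds L) := by
    intro k l
    by_cases h : k ≠ l
    · exact ⟨(S.conv_W k l h).choose, fun _ => (S.conv_W k l h).choose_spec⟩
    · exact ⟨0, fun h' => absurd h' h⟩
  choose LW hLW using convW'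
  -- A diagonal zero off i j
  have htr' : ∑ k, A k k = 2 := by
    simpa [Matrix.trace, Matrix.diag] using htr
  have hjmem : j ∈ univ.erase i := Finset.mem_erase.2 ⟨Ne.symm hij, Finset.mem_univ _⟩
  have h1 : A i i + ∑ k ∈ univ.erase i, A k k = 2 := by
    rw [Finset.add_sum_erase univ (fun k => A k k) (Finset.mem_univ i)]; exact htr'
  have h2 : A j j + ∑ k ∈ (univ.erase i).erase j, A k k = ∑ k ∈ univ.erase i, A k k :=
    Finset.add_sum_erase (univ.erase i) (fun k => A k k) hjmem
  have hrest : ∑ k ∈ (univ.erase i).erase j, A k k = 0 := by omega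
  have hdiag0 : ∀ k, k ≠ i → k ≠ j → A k k = 0 := by
    intro k hki hkj
    have hkmem : k ∈ (univ.erase i).erase j :=
      Finset.mem_erase.2 ⟨hkj, Finset.mem_erase.2 ⟨hki, Finset.mem_univ _⟩⟩
    exact (Finset.sum_eq_zero_iff.1 hrest) k hkmem
  -- limits of z diagonal
  have hz0 : ∀ k, k ≠ i → k ≠ j →
      Tendsto (fun N => (S.eps N : ℂ)^2 * S.z N k) atTop (nhds 0) := by
    intro k hki hkj
    have h0 : ¬ A k k = 1 := by have := hdiag0 k hki hkj; omega
    exact not_not.mp (fun hT => h0 ((hAB.diag_A k).mpr hT))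
  have hLz0 : ∀ k, k ≠ i → k ≠ j → Lz k = 0 :=
    fun k hki hkj => tendsto_nhds_unique (hLz k) (hz0 k hki hkj)
  have hZt0 : ∀ k l, k ≠ l → ¬ ((k = i ∧ l = j) ∨ (k = j ∧ l = i)) →
      Tendsto (fun N => (S.eps N : ℂ)^2 * Zq (S.delta N) (S.z N) k l) atTop (nhds 0) := by
    intro k l hkl hp
    have h0 : ¬ A k l = 1 := by have := hoff k l hkl hp; omega
    exact not_not.mp (fun hT => h0 ((hAB.off_A k l hkl).mpr hT))
  have hLZ0 : ∀ k l, (h : k ≠ l) → ¬ ((k = i ∧ l = j) ∨ (k = j ∧ l = i)) → LZ k l = 0 :=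
    fun k l h hp => tendsto_nhds_unique (hLZ k l h) (hZt0 k l h hp)
  have hLzi : Lz i ≠ 0 := by
    intro h
    exact (hAB.diag_A i).mp hAii (h ▸ hLz i)
  have hLzj : Lz j ≠ 0 := by
    intro h
    exact (hAB.diag_A j).mp hAjj (h ▸ hLz j)
  -- limit of the equations
  have hsumz : ∀ k, Tendsto (fun N => (S.eps N : ℂ)^2 * S.z N k) atTop
      (nhds (∑ l ∈ univ.erase k, m l * LZ k l)) := by
    intro k
    have h1 : ∀ N, (S.eps N : ℂ)^2 * S.z N k
        = ∑ l ∈ univ.erase k, m l * ((S.eps N : ℂ)^2 * Zq (S.delta N) (S.z N) k l) := by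
      intro N
      rw [S.eq_z N k, Finset.mul_sum]
      exact Finset.sum_congr rfl (fun l _ => by ring)
    have h2 : Tendsto (fun N => ∑ l ∈ univ.erase k,
        m l * ((S.eps N : ℂ)^2 * Zq (S.delta N) (S.z N) k l)) atTop
        (nhds (∑ l ∈ univ.erase k, m l * LZ k l)) := by
      apply tendsto_finset_sum
      intro l hl
      have hkl : k ≠ l := Ne.symm (Finset.mem_erase.1 hl).1
      exact (hLZ k l hkl).const_mul (m l)
    exact h2.congr (fun N => (h1 N).symm)
  have hLzeq : ∀ k, Lz k = ∑ l ∈ univ.erase k, m l * LZ k l :=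
    fun k => tendsto_nhds_unique (hLz k) (hsumz k)
  set c : ℂ := LZ i j with hc_def
  have hzi_c : Lz i = m j * c := by
    rw [hLzeq i]
    apply Finset.sum_eq_single_of_mem j hjmem
    intro b hb hbj
    have hbi : i ≠ b := Ne.symm (Finset.mem_erase.1 hb).1
    rw [hLZ0 i b hbi (by
      rintro (⟨-, h'⟩ | ⟨h', -⟩)
      · exact hbj h'
      · exact hij h'), mul_zero]
  have hanti : ∀ N k l, Zq (S.delta N) (S.z N) l k = - Zq (S.delta N) (S.z N) k l := by
    intro N k l
    unfold Zq
    rw [S.delta_symm N l k]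
    ring
  have hLZji : LZ j i = -c := by
    have h1 : Tendsto (fun N => (S.eps N : ℂ)^2 * Zq (S.delta N) (S.z N) j i) atTop
        (nhds (-c)) := by
      have := (hLZ i j hij).neg
      refine this.congr (fun N => ?_)
      rw [hanti N i j]; ring
    exact tendsto_nhds_unique (hLZ j i (Ne.symm hij)) h1
  have hzj_c : Lz j = -(m i * c) := by
    rw [hLzeq j]
    have himem : i ∈ univ.erase j := Finset.mem_erase.2 ⟨hij, Finset.mem_univ _⟩
    have hside : ∀ b ∈ univ.erase j, b ≠ i → m b * LZ j b = 0 := by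
      intro b hb hbi
      have hbj : j ≠ b := Ne.symm (Finset.mem_erase.1 hb).1
      rw [hLZ0 j b hbj (by
        rintro (⟨h', -⟩ | ⟨-, h'⟩)
        · exact hij (h'.symm)
        · exact hbi h'), mul_zero]
    have hsum := Finset.sum_eq_single_of_mem (f := fun l => m l * LZ j l) i himem hside
    rw [hsum]
    show m i * LZ j i = -(m i * c)
    rw [hLZji]
    ring
  have hc : c ≠ 0 := by
    intro h
    apply hLzi
    rw [hzi_c, h, mul_zero]
  have hmz : ∀ k, m k ≠ 0 := by
    intro k
    have := hm {k} ⟨k, Finset.mem_singleton_self k⟩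
    simpa using this
  have hmij : m i + m j ≠ 0 := by
    have := hm {i, j} ⟨i, by simp⟩
    rwa [Finset.sum_pair hij] at this
  have hzd : ∀ l, l ≠ i → Lz i - Lz l ≠ 0 := by
    intro l hl
    by_cases hlj : l = j
    · rw [hlj]
      rw [hzi_c, hzj_c]
      have : m j * c - -(m i * c) = (m i + m j) * c := by ring
      rw [this]
      exact mul_ne_zero hmij hc
    · rw [hLz0 l hl hlj, sub_zero]
      exact hLzi
  -- tendsto of scaled differences
  have tdz : ∀ k l, Tendsto (fun N => (S.eps N : ℂ)^2 * (S.z N k - S.z N l)) atTop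
      (nhds (Lz k - Lz l)) := by
    intro k l
    have := (hLz k).sub (hLz l)
    refine this.congr (fun N => ?_)
    ring
  have tdw : ∀ k l, Tendsto (fun N => (S.eps N : ℂ)^2 * (S.w N k - S.w N l)) atTop
      (nhds (Lw k - Lw l)) := by
    intro k l
    have := (hLw k).sub (hLw l)
    refine this.congr (fun N => ?_)
    ring
  -- the relation LZ * Dw = LW * Dz
  have hrel : ∀ l, (h : l ≠ i) → LZ i l * (Lw i - Lw l) = LW i l * (Lz i - Lz l) := by
    intro l hl
    have hil : i ≠ l := Ne.symm hl
    have hid : ∀ N, ((S.eps N : ℂ)^2 * Zq (S.delta N) (S.z N) i l) *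
        ((S.eps N : ℂ)^2 * (S.w N i - S.w N l))
        = ((S.eps N : ℂ)^2 * Zq (S.delta N) (S.w N) i l) *
        ((S.eps N : ℂ)^2 * (S.z N i - S.z N l)) := by
      intro N
      unfold Zq
      ring
    have h1 := (hLZ i l hil).mul (tdw i l)
    have h2 := (hLW i l hil).mul (tdz i l)
    have h2' := h2.congr (fun N => (hid N).symm)
    exact tendsto_nhds_unique h1 h2'
  have hWij0 : LW i j = 0 := by
    have hil : i ≠ j := hij
    have hl : j ≠ i := Ne.symm hij
    · -- use the cube identity
      have hid2 : ∀ N, ((S.eps N : ℂ)^2 * Zq (S.delta N) (S.w N) i j)^2 *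
          (((S.eps N : ℂ)^2 * (S.z N i - S.z N j))^3 *
            ((S.eps N : ℂ)^2 * (S.w N i - S.w N j)))
          = ((S.eps N : ℂ)^2)^6 := by
        intro N
        have hN := S.normalize N i j hij
        have : (Zq (S.delta N) (S.w N) i j)^2 * ((S.z N i - S.z N j)^3 * (S.w N i - S.w N j))
            = 1 := by
          calc (Zq (S.delta N) (S.w N) i j)^2 * ((S.z N i - S.z N j)^3 * (S.w N i - S.w N j))
              = (S.delta N i j ^ 2 * (S.z N j - S.z N i) * (S.w N j - S.w N i))^3 := by
                unfold Zq; ring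
            _ = 1 := by rw [hN, one_pow]
        linear_combination ((S.eps N : ℂ)^2)^6 * this
      have heps : Tendsto (fun N => ((S.eps N : ℂ)^2)^6) atTop (nhds 0) := by
        have h0 : Tendsto (fun N => (S.eps N : ℂ)) atTop (nhds 0) := by
          have := (Complex.continuous_ofReal.tendsto 0).comp S.eps_lim
          simpa [Function.comp_def] using this
        have := h0.pow 12
        simpa using this.congr (fun N => by ring)
      have hL := ((hLW i j hij).pow 2).mul (((tdz i j).pow 3).mul (tdw i j))
      have hL' := hL.congr (fun N => hid2 N)
      have hrel2 : LW i j ^ 2 * ((Lz i - Lz j)^3 * (Lw i - Lw j)) = 0 :=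
        tendsto_nhds_unique hL' heps
      have hdzij : Lz i - Lz j ≠ 0 := hzd j (Ne.symm hij)
      by_cases hwd : Lw i - Lw j = 0
      · have := hrel j (Ne.symm hij)
        rw [hwd, mul_zero] at this
        exact (mul_eq_zero.1 this.symm).resolve_right hdzij
      · have hsq : LW i j ^ 2 = 0 := by
          rcases mul_eq_zero.1 hrel2 with h | h
          · exact h
          · rcases mul_eq_zero.1 h with h' | h'
            · exact absurd h' (pow_ne_zero 3 hdzij)
            · exact absurd h' hwd
        have hWij : LW i j = 0 := by
          exact pow_eq_zero_iff (two_ne_zero) |>.1 hsq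
        exfalso
        have := hrel j (Ne.symm hij)
        rw [hWij, zero_mul] at this
        rcases mul_eq_zero.1 this with h | h
        · exact hc h
        · exact hwd h
  have hW0 : ∀ l, l ≠ i → LW i l = 0 := by
    intro l hl
    have hil : i ≠ l := Ne.symm hl
    by_cases hlj : l = j
    · rw [hlj]; exact hWij0
    · have h := hrel l hl
      rw [hLZ0 i l hil (by
        rintro (⟨-, h'⟩ | ⟨h', -⟩)
        · exact hlj h'
        · exact hij h'), zero_mul] at h
      exact (mul_eq_zero.1 h.symm).resolve_right (hzd l hl)
  constructor
  · intro l hl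
    have := hLW i l (Ne.symm hl)
    rwa [hW0 l hl] at this
  · have hsumw : Tendsto (fun N => (S.eps N : ℂ)^2 * S.w N i) atTop
        (nhds (∑ l ∈ univ.erase i, m l * LW i l)) := by
      have h1 : ∀ N, (S.eps N : ℂ)^2 * S.w N i
          = ∑ l ∈ univ.erase i, m l * ((S.eps N : ℂ)^2 * Zq (S.delta N) (S.w N) i l) := by
        intro N
        rw [S.eq_w N i, Finset.mul_sum]
        exact Finset.sum_congr rfl (fun l _ => by ring)
      have h2 : Tendsto (fun N => ∑ l ∈ univ.erase i,
          m l * ((S.eps N : ℂ)^2 * Zq (S.delta N) (S.w N) i l)) atTop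
          (nhds (∑ l ∈ univ.erase i, m l * LW i l)) := by
        apply tendsto_finset_sum
        intro l hl
        exact (hLW i l (Ne.symm (Finset.mem_erase.1 hl).1)).const_mul (m l)
      exact h2.congr (fun N => (h1 N).symm)
    have hz : (∑ l ∈ univ.erase i, m l * LW i l) = 0 := by
      apply Finset.sum_eq_zero
      intro l hl
      rw [hW0 l (Finset.mem_erase.1 hl).1, mul_zero]
    rwa [hz] at hsumw

section Helpers

variable {n : ℕ} {m : Fin n → ℂ}

/-- exact identity: `Zq(z)² · (Δz · Δw³) = 1`. -/
lemma Zq_sq_ident (S : SingularSeq n m) (N : ℕ) {k l : Fin n} (h : k ≠ l) :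
    (Zq (S.delta N) (S.z N) k l)^2 * ((S.z N k - S.z N l) * (S.w N k - S.w N l)^3) = 1 := by
  have hN := S.normalize N k l h
  calc (Zq (S.delta N) (S.z N) k l)^2 * ((S.z N k - S.z N l) * (S.w N k - S.w N l)^3)
      = (S.delta N k l ^ 2 * (S.z N l - S.z N k) * (S.w N l - S.w N k))^3 := by
        unfold Zq; ring
    _ = 1 := by rw [hN, one_pow]

/-- exact identity: `Zq(w)² · (Δz³ · Δw) = 1`. -/
lemma Wq_sq_ident (S : SingularSeq n m) (N : ℕ) {k l : Fin n} (h : k ≠ l) :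
    (Zq (S.delta N) (S.w N) k l)^2 * ((S.z N k - S.z N l)^3 * (S.w N k - S.w N l)) = 1 := by
  have hN := S.normalize N k l h
  calc (Zq (S.delta N) (S.w N) k l)^2 * ((S.z N k - S.z N l)^3 * (S.w N k - S.w N l))
      = (S.delta N k l ^ 2 * (S.z N l - S.z N k) * (S.w N l - S.w N k))^3 := by
        unfold Zq; ring
    _ = 1 := by rw [hN, one_pow]

lemma abs_Zq_sq (S : SingularSeq n m) (N : ℕ) {k l : Fin n} (h : k ≠ l) :
    (Complex.abs (Zq (S.delta N) (S.z N) k l))^2 *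
      (Complex.abs (S.z N k - S.z N l) * (Complex.abs (S.w N k - S.w N l))^3) = 1 := by
  have := congrArg Complex.abs (Zq_sq_ident S N h)
  simpa [map_mul, map_pow] using this

lemma abs_Wq_sq (S : SingularSeq n m) (N : ℕ) {k l : Fin n} (h : k ≠ l) :
    (Complex.abs (Zq (S.delta N) (S.w N) k l))^2 *
      ((Complex.abs (S.z N k - S.z N l))^3 * Complex.abs (S.w N k - S.w N l)) = 1 := by
  have := congrArg Complex.abs (Wq_sq_ident S N h)
  simpa [map_mul, map_pow] using this

lemma dz_ne (S : SingularSeq n m) (N : ℕ) {k l : Fin n} (h : k ≠ l) :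
    S.z N k - S.z N l ≠ 0 := by
  intro h0
  have hN := S.normalize N k l h
  rw [show S.z N l - S.z N k = -(S.z N k - S.z N l) by ring, h0] at hN
  simp at hN

lemma dw_ne (S : SingularSeq n m) (N : ℕ) {k l : Fin n} (h : k ≠ l) :
    S.w N k - S.w N l ≠ 0 := by
  intro h0
  have hN := S.normalize N k l h
  rw [show S.w N l - S.w N k = -(S.w N k - S.w N l) by ring, h0] at hN
  simp at hN

lemma delta_ne (S : SingularSeq n m) (N : ℕ) {k l : Fin n} (h : k ≠ l) :
    S.delta N k l ≠ 0 := by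
  intro h0
  have hN := S.normalize N k l h
  rw [h0] at hN
  simp at hN

lemma Zqw_ne (S : SingularSeq n m) (N : ℕ) {k l : Fin n} (h : k ≠ l) :
    Zq (S.delta N) (S.w N) k l ≠ 0 := by
  unfold Zq
  exact mul_ne_zero (pow_ne_zero 3 (delta_ne S N h)) (dw_ne S N h)

lemma tendsto_zero_of_cube {f : ℕ → ℝ} (h0 : ∀ N, 0 ≤ f N)
    (h : Filter.Tendsto (fun N => (f N)^3) Filter.atTop (nhds 0)) :
    Filter.Tendsto f Filter.atTop (nhds 0) := by
  rw [Metric.tendsto_atTop] at h ⊢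
  intro ε hε
  obtain ⟨M, hM⟩ := h (ε^3) (by positivity)
  refine ⟨M, fun N hN => ?_⟩
  have h3 := hM N hN
  rw [Real.dist_eq, sub_zero, abs_of_nonneg (pow_nonneg (h0 N) 3)] at h3
  rw [Real.dist_eq, sub_zero, abs_of_nonneg (h0 N)]
  exact lt_of_pow_lt_pow_left₀ 3 (le_of_lt hε) h3

lemma le_of_sq_le_sq'' {x y : ℝ} (hy : 0 ≤ y) (h : x^2 ≤ y^2) : x ≤ y :=
  le_of_pow_le_pow_left₀ (by norm_num) hy h

lemma abs_sub_le' (a b : ℂ) : Complex.abs (a - b) ≤ Complex.abs a + Complex.abs b := by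
  calc Complex.abs (a - b) = Complex.abs (a + -b) := by ring_nf
    _ ≤ Complex.abs a + Complex.abs (-b) := Complex.abs.add_le _ _
    _ = Complex.abs a + Complex.abs b := by rw [Complex.abs.map_neg]

end Helpers

section Helpers2

open Filter

lemma tendsto_abs_scaled {f : ℕ → ℂ} {L : ℂ} {eps : ℕ → ℝ} (hpos : ∀ N, 0 < eps N)
    (h : Tendsto (fun N => ((eps N : ℝ) : ℂ)^2 * f N) atTop (nhds L)) :
    Tendsto (fun N => (eps N)^2 * Complex.abs (f N)) atTop (nhds (Complex.abs L)) := by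
  have h2 := (Complex.continuous_abs.tendsto L).comp h
  refine h2.congr (fun N => ?_)
  simp only [Function.comp_apply, map_mul, map_pow, Complex.abs_ofReal,
    abs_of_pos (hpos N)]

lemma sq_mul_le {X Y Z E c0 z0 : ℝ} (hY : 0 < Y) (hE : 0 ≤ E) (hc0 : 0 ≤ c0) (hz0 : 0 ≤ z0)
    (hid : X^2*(Y*Z) = 1) (hlow : c0 ≤ E*Y) (hZl : z0 ≤ Z) : X^2*(c0*z0) ≤ E := by
  have h1 : X^2*(c0*z0) ≤ X^2*((E*Y)*Z) := by
    apply mul_le_mul_of_nonneg_left _ (sq_nonneg X)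
    exact mul_le_mul hlow hZl hz0 (mul_nonneg hE (le_of_lt hY))
  calc X^2*(c0*z0) ≤ X^2*((E*Y)*Z) := h1
    _ = E*(X^2*(Y*Z)) := by ring
    _ = E := by rw [hid, mul_one]

lemma K_bound {X Y Z E g h' C : ℝ} (hY : 0 < Y) (hZ : 0 < Z) (hE : 0 < E) (hg : 0 < g)
    (hh : 0 < h') (hX : 0 ≤ X)
    (hid : X^2*(Y*Z^3) = 1)
    (h1 : g ≤ E*Y) (h2 : h' ≤ E*Z) (hC : C = Real.sqrt ((2/g)*(2/h')^3)) : X ≤ C*E^2 := by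
  have hCpos : 0 ≤ C := by rw [hC]; positivity
  apply le_of_sq_le_sq'' (by positivity)
  rw [mul_pow, hC, Real.sq_sqrt (by positivity)]
  have key : X^2*(g*h'^3) ≤ E^4 := by
    have e1 : g*h'^3 ≤ (E*Y)*(E*Z)^3 := by
      apply mul_le_mul h1 (pow_le_pow_left₀ (le_of_lt hh) h2 3) (by positivity) (by positivity)
    calc X^2*(g*h'^3) ≤ X^2*((E*Y)*(E*Z)^3) := mul_le_mul_of_nonneg_left e1 (sq_nonneg X)
      _ = E^4*(X^2*(Y*Z^3)) := by ring
      _ = E^4 := by rw [hid, mul_one]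
  have hgh : (0:ℝ) < g*h'^3 := by positivity
  rw [show (2/g)*(2/h')^3*(E^2)^2 = (16*E^4)/(g*h'^3) by field_simp; ring]
  rw [le_div_iff₀ hgh]
  nlinarith [key, pow_pos hE 4]

end Helpers2


lemma boundZr {X Y u rr ε γ C : ℝ} (hX : 0 ≤ X) (hY : 0 < Y) (hu : 0 < u) (hrr : 0 < rr)
    (hr2 : rr^2 = u) (hε : 0 < ε) (hγ : 0 < γ)
    (hid : X^2*(Y*u^3) = 1) (hlow : γ/2 ≤ ε^2*Y) (hC : C = Real.sqrt (2/γ)) :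
    X*rr^3 ≤ C*ε := by
  apply le_of_sq_le_sq'' (by rw [hC]; positivity)
  rw [mul_pow, mul_pow, hC, Real.sq_sqrt (by positivity)]
  have h6 : (rr^3)^2 = u^3 := by rw [← hr2]; ring
  rw [h6]
  have key := sq_mul_le (X := X) (E := ε^2) (c0 := γ/2) (z0 := u^3) hY (by positivity)
    (by positivity) (by positivity) hid hlow le_rfl
  rw [div_mul_eq_mul_div, le_div_iff₀ hγ]
  nlinarith [key]

lemma boundZr' {X Y W u rr ε γ C : ℝ} (hX : 0 ≤ X) (hY : 0 < Y) (hu : 0 < u) (hrr : 0 < rr)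
    (hr2 : rr^2 = u) (hε : 0 < ε) (hγ : 0 < γ)
    (hid : X^2*(Y*W^3) = 1) (hW : u/2 ≤ W) (hlow : γ/2 ≤ ε^2*Y)
    (hC : C = Real.sqrt (16/γ)) :
    X*rr^3 ≤ C*ε := by
  apply le_of_sq_le_sq'' (by rw [hC]; positivity)
  rw [mul_pow, mul_pow, hC, Real.sq_sqrt (by positivity)]
  have h6 : (rr^3)^2 = u^3 := by rw [← hr2]; ring
  rw [h6]
  have hW3 : (u/2)^3 ≤ W^3 := pow_le_pow_left₀ (by positivity) hW 3
  have key := sq_mul_le (X := X) (E := ε^2) (c0 := γ/2) (z0 := (u/2)^3) hY (by positivity)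
    (by positivity) (by positivity) hid hlow hW3
  rw [div_mul_eq_mul_div, le_div_iff₀ hγ]
  nlinarith [key]

lemma boundU {U Y u rr ε γ cw : ℝ} (hU : 0 ≤ U) (hY : 0 < Y) (hu : 0 < u) (hrr : 0 < rr)
    (hr2 : rr^2 = u) (hε : 0 < ε) (hγ : 0 < γ)
    (hid : U^2*(Y^3*u) = 1) (hup : ε^2*Y ≤ 2*γ) (hcw : cw = Real.sqrt (1/(8*γ^3))) :
    cw*ε^3 ≤ U*rr := by
  apply le_of_sq_le_sq'' (by positivity)
  rw [mul_pow, mul_pow, hcw, Real.sq_sqrt (by positivity), hr2]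
  have h1 : (ε^2*Y)^3 ≤ (2*γ)^3 := pow_le_pow_left₀ (by positivity) hup 3
  have h2 : ε^6 = (ε^2*Y)^3*(U^2*u) := by
    rw [show (ε^2*Y)^3*(U^2*u) = (ε^2)^3*(U^2*(Y^3*u)) from by ring, hid, mul_one]
    ring
  have h3 : ε^6 ≤ 8*γ^3*(U^2*u) := by
    calc ε^6 = (ε^2*Y)^3*(U^2*u) := h2
      _ ≤ (2*γ)^3*(U^2*u) := mul_le_mul_of_nonneg_right h1 (by positivity)
      _ = 8*γ^3*(U^2*u) := by ring
  rw [show 1/(8*γ^3)*(ε^3)^2 = 1*(ε^3)^2/(8*γ^3) from by ring, div_le_iff₀ (by positivity)]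
  nlinarith [h3]

lemma final_ineq {Pv Qv dz dw Uv Vv Zik Zjk QK PK mk : ℂ}
    {ε u rr γc b₀ c₄ CP CQ Ca Cb cw : ℝ}
    (hε : 0 < ε) (hu : 0 < u) (hrr : 0 < rr) (hr2 : rr^2 = u)
    (hγc : 0 < γc) (hb₀ : 0 ≤ b₀) (hc₄ : 0 < c₄) (hcw : 0 < cw)
    (hCa : 0 ≤ Ca) (hCb : 0 ≤ Cb) (hCPn : 0 ≤ CP) (hCQn : 0 ≤ CQ)
    (hidQ : dz * Qv = dw * Pv)
    (hPsplit : Pv = mk * (Zik - Zjk) + PK)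
    (hQsplit : Qv = mk * (Uv - Vv) + QK)
    (h1 : Complex.abs Zik * rr^3 ≤ Ca*ε)
    (h2 : Complex.abs Zjk * rr^3 ≤ Cb*ε)
    (h3 : Complex.abs PK ≤ CP*ε^4)
    (h4 : Complex.abs QK ≤ CQ*ε^4)
    (h5 : γc/2 ≤ ε^2*Complex.abs dz)
    (h6 : Complex.abs dw ≤ (b₀+2)*ε^2)
    (h7 : c₄*Complex.abs Uv ≤ Complex.abs (Uv - Vv))
    (h8 : cw*ε^3 ≤ Complex.abs Uv * rr) :
    Complex.abs mk * c₄ * cw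
      ≤ (2*(b₀+2)*(Complex.abs mk)*(Ca+Cb)/γc) * (ε^2/u)
        + (2*(b₀+2)*CP/γc) * (ε^4*(ε*rr))
        + CQ * (ε*rr) := by
  have hmk : 0 ≤ Complex.abs mk := Complex.abs.nonneg _
  -- step (i): |mk| c₄ cw ε³ ≤ (|Q| + CQ ε⁴) rr
  have si : Complex.abs mk * c₄ * cw * ε^3 ≤ (Complex.abs Qv + CQ*ε^4) * rr := by
    have a1 : Complex.abs mk * c₄ * cw * ε^3 ≤ Complex.abs mk * c₄ * (Complex.abs Uv * rr) := by
      calc Complex.abs mk * c₄ * cw * ε^3 = (Complex.abs mk * c₄) * (cw * ε^3) := by ring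
        _ ≤ (Complex.abs mk * c₄) * (Complex.abs Uv * rr) :=
            mul_le_mul_of_nonneg_left h8 (by positivity)
        _ = Complex.abs mk * c₄ * (Complex.abs Uv * rr) := by ring
    have a2 : Complex.abs mk * c₄ * (Complex.abs Uv * rr)
        ≤ Complex.abs mk * Complex.abs (Uv - Vv) * rr := by
      calc Complex.abs mk * c₄ * (Complex.abs Uv * rr)
          = (Complex.abs mk * (c₄ * Complex.abs Uv)) * rr := by ring
        _ ≤ (Complex.abs mk * Complex.abs (Uv - Vv)) * rr := by
            apply mul_le_mul_of_nonneg_right _ (le_of_lt hrr)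
            exact mul_le_mul_of_nonneg_left h7 hmk
    have a3 : Complex.abs mk * Complex.abs (Uv - Vv) ≤ Complex.abs Qv + CQ*ε^4 := by
      have e1 : mk * (Uv - Vv) = Qv - QK := by rw [hQsplit]; ring
      calc Complex.abs mk * Complex.abs (Uv - Vv) = Complex.abs (mk * (Uv - Vv)) :=
            (map_mul Complex.abs _ _).symm
        _ = Complex.abs (Qv - QK) := by rw [e1]
        _ ≤ Complex.abs Qv + Complex.abs QK := abs_sub_le' _ _
        _ ≤ Complex.abs Qv + CQ*ε^4 := by linarith
    calc Complex.abs mk * c₄ * cw * ε^3 ≤ Complex.abs mk * Complex.abs (Uv - Vv) * rr :=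
          le_trans a1 a2
      _ ≤ (Complex.abs Qv + CQ*ε^4) * rr := mul_le_mul_of_nonneg_right a3 (le_of_lt hrr)
  -- step (ii): γc |Q| ≤ 2 (b₀+2) ε⁴ |P|
  have sii : γc * Complex.abs Qv ≤ 2*(b₀+2)*ε^4*Complex.abs Pv := by
    have b1 : Complex.abs Qv * (γc/2) ≤ Complex.abs Qv * (ε^2*Complex.abs dz) :=
      mul_le_mul_of_nonneg_left h5 (Complex.abs.nonneg _)
    have b2 : Complex.abs dz * Complex.abs Qv = Complex.abs dw * Complex.abs Pv := by
      rw [← map_mul, ← map_mul, hidQ]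
    have b3 : Complex.abs dw * Complex.abs Pv ≤ ((b₀+2)*ε^2) * Complex.abs Pv :=
      mul_le_mul_of_nonneg_right h6 (Complex.abs.nonneg _)
    nlinarith [b1, b2, b3, Complex.abs.nonneg Qv, Complex.abs.nonneg Pv]
  -- step (iii): |P| rr³ ≤ |mk|(Ca+Cb) ε + CP ε⁴ rr³
  have siii : Complex.abs Pv * rr^3 ≤ Complex.abs mk*(Ca+Cb)*ε + CP*ε^4*rr^3 := by
    have c1 : Complex.abs Pv ≤ Complex.abs mk*(Complex.abs Zik + Complex.abs Zjk) + CP*ε^4 := by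
      calc Complex.abs Pv = Complex.abs (mk*(Zik - Zjk) + PK) := by rw [hPsplit]
        _ ≤ Complex.abs (mk*(Zik - Zjk)) + Complex.abs PK := Complex.abs.add_le _ _
        _ ≤ Complex.abs mk*(Complex.abs Zik + Complex.abs Zjk) + CP*ε^4 := by
            rw [map_mul]
            exact add_le_add (mul_le_mul_of_nonneg_left (abs_sub_le' _ _) hmk) h3
    calc Complex.abs Pv * rr^3
        ≤ (Complex.abs mk*(Complex.abs Zik + Complex.abs Zjk) + CP*ε^4) * rr^3 :=
          mul_le_mul_of_nonneg_right c1 (by positivity)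
      _ = Complex.abs mk*(Complex.abs Zik*rr^3 + Complex.abs Zjk*rr^3) + CP*ε^4*rr^3 := by ring
      _ ≤ Complex.abs mk*(Ca*ε + Cb*ε) + CP*ε^4*rr^3 := by
          have := add_le_add h1 h2
          nlinarith [this, hmk]
      _ = Complex.abs mk*(Ca+Cb)*ε + CP*ε^4*rr^3 := by ring
  -- combine, multiplied by ε³ u γc
  have main : Complex.abs mk * c₄ * cw * (ε^3*rr^2) * γc
      ≤ 2*(b₀+2)*(Complex.abs mk)*(Ca+Cb)*ε^5 + 2*(b₀+2)*CP*ε^8*rr^3 + CQ*γc*ε^4*rr^3 := by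
    have d1 : Complex.abs mk * c₄ * cw * (ε^3*rr^2) * γc ≤ (Complex.abs Qv + CQ*ε^4)*rr^3*γc := by
      calc Complex.abs mk * c₄ * cw * (ε^3*rr^2) * γc
          = (Complex.abs mk * c₄ * cw * ε^3)*(rr^2*γc) := by ring
        _ ≤ ((Complex.abs Qv + CQ*ε^4) * rr)*(rr^2*γc) := by
            apply mul_le_mul_of_nonneg_right si (by positivity)
        _ = (Complex.abs Qv + CQ*ε^4)*rr^3*γc := by ring
    have d2 : (Complex.abs Qv + CQ*ε^4)*rr^3*γc
        = (γc*Complex.abs Qv)*rr^3 + CQ*γc*ε^4*rr^3 := by ring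
    have d3 : (γc*Complex.abs Qv)*rr^3 ≤ (2*(b₀+2)*ε^4)*(Complex.abs Pv*rr^3) := by
      calc (γc*Complex.abs Qv)*rr^3 ≤ (2*(b₀+2)*ε^4*Complex.abs Pv)*rr^3 :=
            mul_le_mul_of_nonneg_right sii (by positivity)
        _ = (2*(b₀+2)*ε^4)*(Complex.abs Pv*rr^3) := by ring
    have d4 : (2*(b₀+2)*ε^4)*(Complex.abs Pv*rr^3)
        ≤ (2*(b₀+2)*ε^4)*(Complex.abs mk*(Ca+Cb)*ε + CP*ε^4*rr^3) :=
      mul_le_mul_of_nonneg_left siii (by positivity)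
    calc Complex.abs mk * c₄ * cw * (ε^3*rr^2) * γc ≤ (Complex.abs Qv + CQ*ε^4)*rr^3*γc := d1
      _ = (γc*Complex.abs Qv)*rr^3 + CQ*γc*ε^4*rr^3 := d2
      _ ≤ (2*(b₀+2)*ε^4)*(Complex.abs mk*(Ca+Cb)*ε + CP*ε^4*rr^3) + CQ*γc*ε^4*rr^3 := by
          linarith [le_trans d3 d4]
      _ = 2*(b₀+2)*(Complex.abs mk)*(Ca+Cb)*ε^5 + 2*(b₀+2)*CP*ε^8*rr^3 + CQ*γc*ε^4*rr^3 := by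
          ring
  -- divide
  rw [← hr2]
  have hpos : (0:ℝ) < ε^3*rr^2*γc := by positivity
  apply le_of_mul_le_mul_right _ hpos
  calc Complex.abs mk * c₄ * cw * (ε^3*rr^2*γc)
      = Complex.abs mk * c₄ * cw * (ε^3*rr^2) * γc := by ring
    _ ≤ 2*(b₀+2)*(Complex.abs mk)*(Ca+Cb)*ε^5 + 2*(b₀+2)*CP*ε^8*rr^3 + CQ*γc*ε^4*rr^3 := main
    _ = ((2*(b₀+2)*(Complex.abs mk)*(Ca+Cb)/γc) * (ε^2/rr^2)
        + (2*(b₀+2)*CP/γc) * (ε^4*(ε*rr)) + CQ * (ε*rr)) * (ε^3*rr^2*γc) := by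
        field_simp

lemma combine_bound {a X Y C1 C2 E : ℝ} (ha : 0 ≤ a) (hX : 0 ≤ X) (hY : 0 ≤ Y)
    (hE : 0 ≤ E) (h1 : X ≤ C1*E) (h2 : Y ≤ C2*E) :
    a * (X + Y) ≤ a*(C1+C2)*E := by nlinarith

set_option maxHeartbeats 1000000 in
lemma key {n : ℕ} (hn : 2 ≤ n) (m : Fin n → ℂ)
    (hm : ∀ I : Finset (Fin n), I.Nonempty → ∑ k ∈ I, m k ≠ 0)
    (S : SingularSeq n m) (A B : Matrix (Fin n) (Fin n) ℕ)
    (hAB : IsZWMatrices S A B) (i j : Fin n) (hij : i ≠ j)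
    (htr : Matrix.trace A = 2) (hAii : A i i = 1) (hAjj : A j j = 1)
    (hoff : ∀ k l : Fin n, k ≠ l → ¬ ((k = i ∧ l = j) ∨ (k = j ∧ l = i)) → A k l = 0) :
    (∀ k : Fin n, B i k = 0 ∧ B j k = 0) ∧
      (m i ^ 3 + m j ^ 3 ≠ 0 → ((Matrix.trace B : ℕ) : ℤ) ≠ (n : ℤ) - 3) := by
  classical
  obtain ⟨hWi, hwi⟩ := row_limits hm S A B hAB i j hij htr hAii hAjj hoff
  have hoff' : ∀ k l : Fin n, k ≠ l → ¬ ((k = j ∧ l = i) ∨ (k = i ∧ l = j)) → A k l = 0 :=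
    fun k l h h2 => hoff k l h (by tauto)
  obtain ⟨hWj, hwj⟩ := row_limits hm S A B hAB j i (Ne.symm hij) htr hAjj hAii hoff'
  have hB01 : ∀ p q : Fin n, ¬ B p q = 1 → B p q = 0 := by
    intro p q h
    rcases hAB.zeroOne_B p q with h0 | h1
    · exact h0
    · exact absurd h1 h
  have hBrow : ∀ k : Fin n, B i k = 0 ∧ B j k = 0 := by
    intro k
    constructor
    · by_cases hk : k = i
      · rw [hk]
        exact hB01 i i (fun h1 => (hAB.diag_B i).mp h1 hwi)
      · exact hB01 i k (fun h1 => (hAB.off_B i k (Ne.symm hk)).mp h1 (hWi k hk))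
    · by_cases hk : k = j
      · rw [hk]
        exact hB01 j j (fun h1 => (hAB.diag_B j).mp h1 hwj)
      · exact hB01 j k (fun h1 => (hAB.off_B j k (Ne.symm hk)).mp h1 (hWj k hk))
  refine ⟨hBrow, ?_⟩
  intro hm3 htrB
  -- ===== Part 2 =====
  -- limit data
  choose Lz hLz using S.conv_z
  choose Lw hLw using S.conv_w
  have convZ' : ∀ k l : Fin n, ∃ L : ℂ, k ≠ l →
      Tendsto (fun N => (S.eps N : ℂ)^2 * Zq (S.delta N) (S.z N) k l) atTop (nhds L) := by
    intro k l
    by_cases h : k ≠ l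
    · exact ⟨(S.conv_Z k l h).choose, fun _ => (S.conv_Z k l h).choose_spec⟩
    · exact ⟨0, fun h' => absurd h' h⟩
  choose LZ hLZ using convZ'
  have hmz : ∀ k, m k ≠ 0 := by
    intro k
    have := hm {k} ⟨k, Finset.mem_singleton_self k⟩
    simpa using this
  have hmij : m i + m j ≠ 0 := by
    have := hm {i, j} ⟨i, by simp⟩
    rwa [Finset.sum_pair hij] at this
  have htr' : ∑ k, A k k = 2 := by simpa [Matrix.trace, Matrix.diag] using htr
  have hjmem : j ∈ univ.erase i := Finset.mem_erase.2 ⟨Ne.symm hij, Finset.mem_univ _⟩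
  have himem : i ∈ univ.erase j := Finset.mem_erase.2 ⟨hij, Finset.mem_univ _⟩
  have hA1 : A i i + ∑ k ∈ univ.erase i, A k k = 2 := by
    rw [Finset.add_sum_erase univ (fun k => A k k) (Finset.mem_univ i)]; exact htr'
  have hA2 : A j j + ∑ k ∈ (univ.erase i).erase j, A k k = ∑ k ∈ univ.erase i, A k k :=
    Finset.add_sum_erase (univ.erase i) (fun k => A k k) hjmem
  have hrest : ∑ k ∈ (univ.erase i).erase j, A k k = 0 := by omega
  have hdiag0 : ∀ k, k ≠ i → k ≠ j → A k k = 0 := by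
    intro k hki hkj
    exact (Finset.sum_eq_zero_iff.1 hrest) k
      (Finset.mem_erase.2 ⟨hkj, Finset.mem_erase.2 ⟨hki, Finset.mem_univ _⟩⟩)
  have hz0 : ∀ k, k ≠ i → k ≠ j →
      Tendsto (fun N => (S.eps N : ℂ)^2 * S.z N k) atTop (nhds 0) := by
    intro k hki hkj
    have h0 : ¬ A k k = 1 := by have := hdiag0 k hki hkj; omega
    exact not_not.mp (fun hT => h0 ((hAB.diag_A k).mpr hT))
  have hLz0 : ∀ k, k ≠ i → k ≠ j → Lz k = 0 :=
    fun k hki hkj => tendsto_nhds_unique (hLz k) (hz0 k hki hkj)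
  have hZt0 : ∀ k l, k ≠ l → ¬ ((k = i ∧ l = j) ∨ (k = j ∧ l = i)) →
      Tendsto (fun N => (S.eps N : ℂ)^2 * Zq (S.delta N) (S.z N) k l) atTop (nhds 0) := by
    intro k l hkl hp
    have h0 : ¬ A k l = 1 := by have := hoff k l hkl hp; omega
    exact not_not.mp (fun hT => h0 ((hAB.off_A k l hkl).mpr hT))
  have hLzi : Lz i ≠ 0 := fun h => (hAB.diag_A i).mp hAii (h ▸ hLz i)
  have hLzj : Lz j ≠ 0 := fun h => (hAB.diag_A j).mp hAjj (h ▸ hLz j)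
  have hsumz : ∀ k, Tendsto (fun N => (S.eps N : ℂ)^2 * S.z N k) atTop
      (nhds (∑ l ∈ univ.erase k, m l * LZ k l)) := by
    intro k
    have h1 : ∀ N, (S.eps N : ℂ)^2 * S.z N k
        = ∑ l ∈ univ.erase k, m l * ((S.eps N : ℂ)^2 * Zq (S.delta N) (S.z N) k l) := by
      intro N
      rw [S.eq_z N k, Finset.mul_sum]
      exact Finset.sum_congr rfl (fun l _ => by ring)
    have h2 : Tendsto (fun N => ∑ l ∈ univ.erase k,
        m l * ((S.eps N : ℂ)^2 * Zq (S.delta N) (S.z N) k l)) atTop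
        (nhds (∑ l ∈ univ.erase k, m l * LZ k l)) := by
      apply tendsto_finset_sum
      intro l hl
      exact (hLZ k l (Ne.symm (Finset.mem_erase.1 hl).1)).const_mul (m l)
    exact h2.congr (fun N => (h1 N).symm)
  have hLzeq : ∀ k, Lz k = ∑ l ∈ univ.erase k, m l * LZ k l :=
    fun k => tendsto_nhds_unique (hLz k) (hsumz k)
  set c : ℂ := LZ i j with hc_def
  have hLZ0 : ∀ k l, k ≠ l → ¬ ((k = i ∧ l = j) ∨ (k = j ∧ l = i)) → LZ k l = 0 :=
    fun k l h hp => tendsto_nhds_unique (hLZ k l h) (hZt0 k l h hp)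
  have hzi_c : Lz i = m j * c := by
    rw [hLzeq i]
    apply Finset.sum_eq_single_of_mem j hjmem
    intro b hb hbj
    have hbi : i ≠ b := Ne.symm (Finset.mem_erase.1 hb).1
    rw [hLZ0 i b hbi (by
      rintro (⟨-, h'⟩ | ⟨h', -⟩)
      · exact hbj h'
      · exact hij h'), mul_zero]
  have hanti : ∀ N (k l : Fin n), Zq (S.delta N) (S.z N) l k = - Zq (S.delta N) (S.z N) k l := by
    intro N k l
    unfold Zq
    rw [S.delta_symm N l k]
    ring
  have hLZji : LZ j i = -c := by
    have h1 : Tendsto (fun N => (S.eps N : ℂ)^2 * Zq (S.delta N) (S.z N) j i) atTop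
        (nhds (-c)) := by
      have := (hLZ i j hij).neg
      refine this.congr (fun N => ?_)
      rw [hanti N i j]; ring
    exact tendsto_nhds_unique (hLZ j i (Ne.symm hij)) h1
  have hzj_c : Lz j = -(m i * c) := by
    rw [hLzeq j]
    have hside : ∀ b ∈ univ.erase j, b ≠ i → m b * LZ j b = 0 := by
      intro b hb hbi
      have hbj : j ≠ b := Ne.symm (Finset.mem_erase.1 hb).1
      rw [hLZ0 j b hbj (by
        rintro (⟨h', -⟩ | ⟨-, h'⟩)
        · exact hij (h'.symm)
        · exact hbi h'), mul_zero]
    have hsum := Finset.sum_eq_single_of_mem (f := fun l => m l * LZ j l) i himem hside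
    rw [hsum]
    show m i * LZ j i = -(m i * c)
    rw [hLZji]
    ring
  have hc : c ≠ 0 := fun h => hLzi (by rw [hzi_c, h, mul_zero])
  have hLzd : Lz i - Lz j ≠ 0 := by
    rw [hzi_c, hzj_c, show m j * c - -(m i * c) = (m i + m j) * c by ring]
    exact mul_ne_zero hmij hc
  -- ===== extract k₀ =====
  have hBii : B i i = 0 := (hBrow i).1
  have hBjj : B j j = 0 := (hBrow j).2
  have htrB' : (↑(∑ k, B k k) : ℤ) = (n:ℤ) - 3 := by
    have h0 : Matrix.trace B = ∑ k, B k k := by simp [Matrix.trace, Matrix.diag]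
    rw [← h0]; exact htrB
  have hB1 : B i i + ∑ k ∈ univ.erase i, B k k = ∑ k, B k k :=
    Finset.add_sum_erase univ (fun k => B k k) (Finset.mem_univ i)
  have hB2 : B j j + ∑ k ∈ (univ.erase i).erase j, B k k = ∑ k ∈ univ.erase i, B k k :=
    Finset.add_sum_erase (univ.erase i) (fun k => B k k) hjmem
  set sK : Finset (Fin n) := (univ.erase i).erase j with hsK_def
  have hcard_s : sK.card = n - 2 := by
    rw [hsK_def, Finset.card_erase_of_mem hjmem, Finset.card_erase_of_mem (Finset.mem_univ i),
      Finset.card_univ, Fintype.card_fin]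
    omega
  have h3n : 3 ≤ n := by omega
  have hsum_s : ∑ k ∈ sK, B k k = n - 3 := by omega
  set t : Finset (Fin n) := sK.filter (fun k => B k k = 1) with ht_def
  have htcard : t.card = n - 3 := by
    have e0 : ∑ k ∈ t, B k k = ∑ k ∈ sK, B k k := by
      rw [ht_def]
      exact Finset.sum_filter_of_ne (fun k _ h => by
        rcases hAB.zeroOne_B k k with h0 | h1
        · exact absurd h0 h
        · exact h1)
    have e1 : ∑ k ∈ t, B k k = ∑ _k ∈ t, 1 :=
      Finset.sum_congr rfl (fun k hk => (Finset.mem_filter.1 hk).2)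
    rw [Finset.sum_const, smul_eq_mul, mul_one] at e1
    omega
  have htsub : t ⊆ sK := Finset.filter_subset _ _
  have hst : (sK \ t).card = 1 := by
    rw [Finset.card_sdiff_of_subset htsub]
    have := Finset.card_le_card htsub
    omega
  obtain ⟨k₀, hk₀⟩ := Finset.card_eq_one.1 hst
  have hk₀mem : k₀ ∈ sK \ t := by rw [hk₀]; exact Finset.mem_singleton_self k₀
  have hk₀s : k₀ ∈ sK := (Finset.mem_sdiff.1 hk₀mem).1
  have hk₀t : k₀ ∉ t := (Finset.mem_sdiff.1 hk₀mem).2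
  have hk₀j : k₀ ≠ j := (Finset.mem_erase.1 hk₀s).1
  have hk₀i : k₀ ≠ i := (Finset.mem_erase.1 (Finset.mem_erase.1 hk₀s).2).1
  have hik₀ : i ≠ k₀ := Ne.symm hk₀i
  have hjk₀ : j ≠ k₀ := Ne.symm hk₀j
  have hBk₀ : B k₀ k₀ = 0 := hB01 k₀ k₀ (fun h1 => hk₀t (Finset.mem_filter.2 ⟨hk₀s, h1⟩))
  have hK1 : ∀ l, l ∈ sK → l ≠ k₀ → B l l = 1 := by
    intro l hls hlk
    by_contra hB
    have hmem : l ∈ sK \ t := Finset.mem_sdiff.2 ⟨hls, fun ht' => hB (Finset.mem_filter.1 ht').2⟩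
    rw [hk₀] at hmem
    exact hlk (Finset.mem_singleton.1 hmem)
  have hLwi : Lw i = 0 := tendsto_nhds_unique (hLw i) hwi
  have hLwj : Lw j = 0 := tendsto_nhds_unique (hLw j) hwj
  have hwk₀ : Tendsto (fun N => (S.eps N : ℂ)^2 * S.w N k₀) atTop (nhds 0) := by
    have h0 : ¬ B k₀ k₀ = 1 := by omega
    exact not_not.mp (fun hT => h0 ((hAB.diag_B k₀).mpr hT))
  have hLwk₀ : Lw k₀ = 0 := tendsto_nhds_unique (hLw k₀) hwk₀
  have hLwK : ∀ l, l ∈ sK → l ≠ k₀ → Lw l ≠ 0 := by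
    intro l hls hlk h0
    exact (hAB.diag_B l).mp (hK1 l hls hlk) (h0 ▸ hLw l)
  have hls_ne : ∀ l, l ∈ sK → l ≠ i ∧ l ≠ j := fun l hls =>
    ⟨(Finset.mem_erase.1 (Finset.mem_erase.1 hls).2).1, (Finset.mem_erase.1 hls).1⟩
  -- ===== analytic core: basic asymptotics =====
  have hapos : ∀ N, 0 < S.eps N := S.eps_pos
  have tdz : ∀ k l : Fin n, Tendsto (fun N => (S.eps N : ℂ)^2 * (S.z N k - S.z N l)) atTop
      (nhds (Lz k - Lz l)) := fun k l => ((hLz k).sub (hLz l)).congr (fun N => by ring)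
  have tdw : ∀ k l : Fin n, Tendsto (fun N => (S.eps N : ℂ)^2 * (S.w N k - S.w N l)) atTop
      (nhds (Lw k - Lw l)) := fun k l => ((hLw k).sub (hLw l)).congr (fun N => by ring)
  set u : ℕ → ℝ := fun N => Complex.abs (S.w N i - S.w N k₀) with hu_def
  have hupos : ∀ N, 0 < u N := fun N => Complex.abs.pos (dw_ne S N hik₀)
  set r : ℕ → ℝ := fun N => Real.sqrt (u N) with hr_def
  have hrpos : ∀ N, 0 < r N := fun N => Real.sqrt_pos.2 (hupos N)
  have hr2 : ∀ N, (r N)^2 = u N := fun N => Real.sq_sqrt (le_of_lt (hupos N))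
  -- ε² u → 0
  have hau : Tendsto (fun N => (S.eps N)^2 * u N) atTop (nhds 0) := by
    have h1 := tendsto_abs_scaled hapos (tdw i k₀)
    rw [hLwi, hLwk₀, sub_zero, map_zero] at h1
    exact h1
  -- ε r → 0
  have har : Tendsto (fun N => S.eps N * r N) atTop (nhds 0) := by
    have h2 := hau.sqrt
    rw [Real.sqrt_zero] at h2
    refine h2.congr (fun N => ?_)
    rw [Real.sqrt_mul (by positivity) (u N), Real.sqrt_sq (le_of_lt (hapos N))]
  -- ε²/u → 0
  have hZik₀0 : Tendsto (fun N => (S.eps N : ℂ)^2 * Zq (S.delta N) (S.z N) i k₀) atTop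
      (nhds 0) := hZt0 i k₀ hik₀ (by
    rintro (⟨-, h'⟩ | ⟨h', -⟩)
    · exact hk₀j h'
    · exact hij h')
  have haou : Tendsto (fun N => (S.eps N)^2 / u N) atTop (nhds 0) := by
    apply tendsto_zero_of_cube (fun N => by positivity)
    have h1 := tendsto_abs_scaled hapos hZik₀0
    rw [map_zero] at h1
    have h2 := tendsto_abs_scaled hapos (tdz i k₀)
    have h3 := (h1.pow 2).mul h2
    rw [show (0:ℝ)^2 * Complex.abs (Lz i - Lz k₀) = 0 by ring] at h3
    refine h3.congr (fun N => ?_)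
    have hid := abs_Zq_sq S N hik₀
    simp only [hu_def]
    have hune : Complex.abs (S.w N i - S.w N k₀) ≠ 0 := (Complex.abs.pos (dw_ne S N hik₀)).ne'
    have hep : S.eps N ≠ 0 := (hapos N).ne'
    field_simp
    linear_combination hid
  -- |dz| lower bound, eventually
  set γc : ℝ := Complex.abs (Lz i - Lz j) with hγc_def
  have hγcpos : 0 < γc := Complex.abs.pos hLzd
  have habsdz := tendsto_abs_scaled hapos (tdz i j)
  rw [← hγc_def] at habsdz
  have ev_dz : ∀ᶠ N in atTop, γc/2 ≤ (S.eps N)^2 * Complex.abs (S.z N i - S.z N j) :=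
    habsdz.eventually (eventually_ge_nhds (by linarith))
  -- |dw| upper bound, eventually
  have habsZij := tendsto_abs_scaled hapos (hLZ i j hij)
  rw [← hc_def] at habsZij
  have hcabs : 0 < Complex.abs c := Complex.abs.pos hc
  set b₀ : ℝ := ((Complex.abs c)^4 * γc^2)⁻¹ with hb₀_def
  have hb₀nn : 0 ≤ b₀ := by positivity
  have hx6 : Tendsto (fun N => (Complex.abs (S.w N i - S.w N j) / (S.eps N)^2)^6) atTop
      (nhds b₀) := by
    have hden := (habsZij.pow 4).mul (habsdz.pow 2)
    have h2 := hden.inv₀ (mul_pos (pow_pos hcabs 4) (pow_pos hγcpos 2)).ne'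
    rw [← hb₀_def] at h2
    refine h2.congr (fun N => ?_)
    have hid := abs_Zq_sq S N hij
    have hsq := congrArg (fun t : ℝ => t^2) hid
    simp only [mul_pow, one_pow] at hsq
    have hep : S.eps N ≠ 0 := (hapos N).ne'
    have hXne : Complex.abs (Zq (S.delta N) (S.z N) i j) ≠ 0 :=
      (Complex.abs.pos (mul_ne_zero (pow_ne_zero 3 (delta_ne S N hij)) (dz_ne S N hij))).ne'
    have hYne : Complex.abs (S.z N i - S.z N j) ≠ 0 :=
      (Complex.abs.pos (dz_ne S N hij)).ne'
    field_simp
    linear_combination (-1 : ℝ) * hsq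
  have ev_dw : ∀ᶠ N in atTop, Complex.abs (S.w N i - S.w N j) ≤ (b₀+2)*(S.eps N)^2 := by
    have h1 : ∀ᶠ N in atTop, (Complex.abs (S.w N i - S.w N j)/(S.eps N)^2)^6 ≤ b₀+1 :=
      hx6.eventually (eventually_le_nhds (by linarith))
    filter_upwards [h1] with N hN
    have hε2 : (0:ℝ) < (S.eps N)^2 := pow_pos (hapos N) 2
    have hxb : Complex.abs (S.w N i - S.w N j)/(S.eps N)^2 ≤ b₀+2 := by
      by_cases hx1 : Complex.abs (S.w N i - S.w N j)/(S.eps N)^2 ≤ 1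
      · linarith
      · push_neg at hx1
        have h6 : Complex.abs (S.w N i - S.w N j)/(S.eps N)^2
            ≤ (Complex.abs (S.w N i - S.w N j)/(S.eps N)^2)^6 :=
          le_self_pow₀ (le_of_lt hx1) (by norm_num)
        linarith
    calc Complex.abs (S.w N i - S.w N j)
        = (Complex.abs (S.w N i - S.w N j)/(S.eps N)^2)*(S.eps N)^2 := (div_mul_cancel₀ _ hε2.ne').symm
      _ ≤ (b₀+2)*(S.eps N)^2 := mul_le_mul_of_nonneg_right hxb (le_of_lt hε2)
  -- |w i - w j| / u → 0
  have hdwu : Tendsto (fun N => Complex.abs (S.w N i - S.w N j)/u N) atTop (nhds 0) := by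
    apply squeeze_zero' (Filter.Eventually.of_forall (fun N => by positivity))
      (g := fun N => (b₀+2)*((S.eps N)^2/u N))
    · filter_upwards [ev_dw] with N hN
      rw [show (b₀+2)*((S.eps N)^2/u N) = ((b₀+2)*(S.eps N)^2)/u N by ring,
        div_le_div_iff_of_pos_right (hupos N)]
      exact hN
    · have := haou.const_mul (b₀+2)
      simpa using this
  have hcd : Tendsto (fun N => (S.w N i - S.w N j)/(S.w N i - S.w N k₀)) atTop (nhds 0) := by
    rw [tendsto_zero_iff_norm_tendsto_zero]
    refine hdwu.congr (fun N => ?_)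
    rw [norm_div]
    simp only [hu_def, Complex.norm_eq_abs]
  have hratio : Tendsto (fun N => (S.w N i - S.w N k₀)/(S.w N j - S.w N k₀)) atTop (nhds 1) := by
    have h1 : Tendsto (fun N => 1 - (S.w N i - S.w N j)/(S.w N i - S.w N k₀)) atTop
        (nhds 1) := by
      have := (tendsto_const_nhds (x := (1:ℂ))).sub hcd
      simpa using this
    have h2 := h1.inv₀ one_ne_zero
    rw [inv_one] at h2
    refine h2.congr (fun N => ?_)
    have hDWi := dw_ne S N hik₀
    have hDWj := dw_ne S N hjk₀
    have h3 : (1:ℂ) - (S.w N i - S.w N j)/(S.w N i - S.w N k₀)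
        = (S.w N j - S.w N k₀)/(S.w N i - S.w N k₀) := by
      field_simp
      ring
    rw [h3, inv_div]
  -- the quantity x and its square limit τ
  set x : ℕ → ℂ := fun N => Zq (S.delta N) (S.w N) j k₀ / Zq (S.delta N) (S.w N) i k₀
    with hx_def
  set τ : ℂ := ((Lz i)/(Lz j))^3 with hτ_def
  have hLzk₀ : Lz k₀ = 0 := hLz0 k₀ hk₀i hk₀j
  have hx2 : Tendsto (fun N => (x N)^2) atTop (nhds τ) := by
    have h1 : Tendsto (fun N => ((S.eps N : ℂ)^2*(S.z N i - S.z N k₀))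
        /((S.eps N : ℂ)^2*(S.z N j - S.z N k₀))) atTop (nhds ((Lz i)/(Lz j))) := by
      have := (tdz i k₀).div (tdz j k₀) (by rw [hLzk₀, sub_zero]; exact hLzj)
      rwa [hLzk₀, sub_zero, sub_zero] at this
    have h2 := (h1.pow 3).mul hratio
    rw [mul_one, ← hτ_def] at h2
    refine h2.congr (fun N => ?_)
    have hA := Wq_sq_ident S N hik₀
    have hB := Wq_sq_ident S N hjk₀
    have hU := Zqw_ne S N hik₀
    have hV := Zqw_ne S N hjk₀
    have hZi := dz_ne S N hik₀
    have hZj := dz_ne S N hjk₀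
    have hWi := dw_ne S N hik₀
    have hWj := dw_ne S N hjk₀
    have hee : ((S.eps N : ℝ) : ℂ) ≠ 0 := by
      simp only [ne_eq, Complex.ofReal_eq_zero]
      exact (hapos N).ne'
    have e1 : (x N)^2
        = ((S.z N i - S.z N k₀)^3*(S.w N i - S.w N k₀))
          /((S.z N j - S.z N k₀)^3*(S.w N j - S.w N k₀)) := by
      simp only [hx_def]
      rw [div_pow, eq_div_iff (mul_ne_zero (pow_ne_zero 3 hZj) hWj),
        div_mul_eq_mul_div, div_eq_iff (pow_ne_zero 2 hU)]
      linear_combination hB - hA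
    rw [e1]
    field_simp
  have hτ1 : τ ≠ 1 := by
    intro h
    have h3 : (Lz i)^3 = (Lz j)^3 := by
      rw [hτ_def, div_pow] at h
      exact (div_eq_one_iff_eq (pow_ne_zero 3 hLzj)).1 h
    have h4 : c^3*(m i^3 + m j^3) = 0 := by
      rw [hzi_c, hzj_c] at h3
      linear_combination h3
    rcases mul_eq_zero.1 h4 with h' | h'
    · exact pow_ne_zero 3 hc h'
    · exact hm3 h'
  set η : ℝ := Complex.abs (1 - τ)/2 with hη_def
  have h1τpos : 0 < Complex.abs (1 - τ) := Complex.abs.pos (sub_ne_zero.2 (Ne.symm hτ1))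
  have hηpos : 0 < η := by rw [hη_def]; linarith
  set ξ : ℝ := Real.sqrt (Complex.abs τ + 1) with hξ_def
  have hξ0 : 0 ≤ ξ := Real.sqrt_nonneg _
  have hξ2 : ξ^2 = Complex.abs τ + 1 := Real.sq_sqrt (by positivity)
  have habs1x2 : Tendsto (fun N => Complex.abs (1 - (x N)^2)) atTop
      (nhds (Complex.abs (1-τ))) := by
    have := (Complex.continuous_abs.tendsto _).comp
      ((tendsto_const_nhds (x := (1:ℂ))).sub hx2)
    simpa [Function.comp_def] using this
  have ev_x2 : ∀ᶠ N in atTop, η ≤ Complex.abs (1 - (x N)^2) :=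
    habs1x2.eventually (eventually_ge_nhds (by rw [hη_def]; linarith))
  have habsx2 : Tendsto (fun N => Complex.abs ((x N)^2)) atTop (nhds (Complex.abs τ)) := by
    have := (Complex.continuous_abs.tendsto _).comp hx2
    simpa [Function.comp_def] using this
  have ev_xb : ∀ᶠ N in atTop, Complex.abs (x N) ≤ ξ := by
    have h2 : ∀ᶠ N in atTop, Complex.abs ((x N)^2) ≤ Complex.abs τ + 1 :=
      habsx2.eventually (eventually_le_nhds (by linarith))
    filter_upwards [h2] with N hN
    apply le_of_sq_le_sq'' hξ0
    rw [hξ2]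
    calc (Complex.abs (x N))^2 = Complex.abs ((x N)^2) := (map_pow Complex.abs (x N) 2).symm
      _ ≤ Complex.abs τ + 1 := hN
  set c₄ : ℝ := η/(1+ξ) with hc₄_def
  have hc₄pos : 0 < c₄ := div_pos hηpos (by linarith)
  have ev_T : ∀ᶠ N in atTop, c₄ * Complex.abs (Zq (S.delta N) (S.w N) i k₀)
      ≤ Complex.abs (Zq (S.delta N) (S.w N) i k₀ - Zq (S.delta N) (S.w N) j k₀) := by
    filter_upwards [ev_x2, ev_xb] with N h1 h2
    have hU := Zqw_ne S N hik₀
    have hid : Zq (S.delta N) (S.w N) i k₀ - Zq (S.delta N) (S.w N) j k₀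
        = Zq (S.delta N) (S.w N) i k₀ * (1 - x N) := by
      simp only [hx_def]
      field_simp
    have h3 : Complex.abs (1 - (x N)^2) ≤ Complex.abs (1 - x N) * (1 + ξ) := by
      have e4 : (1:ℂ) - (x N)^2 = (1 - x N)*(1 + x N) := by ring
      rw [e4, map_mul]
      apply mul_le_mul_of_nonneg_left _ (Complex.abs.nonneg _)
      calc Complex.abs (1 + x N) ≤ Complex.abs 1 + Complex.abs (x N) := Complex.abs.add_le _ _
        _ ≤ 1 + ξ := by rw [map_one]; linarith
    have h4 : c₄ ≤ Complex.abs (1 - x N) := by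
      rw [hc₄_def, div_le_iff₀ (by linarith : (0:ℝ) < 1 + ξ)]
      calc η ≤ Complex.abs (1 - (x N)^2) := h1
        _ ≤ Complex.abs (1 - x N) * (1 + ξ) := h3
    rw [hid, map_mul]
    calc c₄ * Complex.abs (Zq (S.delta N) (S.w N) i k₀)
        = Complex.abs (Zq (S.delta N) (S.w N) i k₀) * c₄ := by ring
      _ ≤ Complex.abs (Zq (S.delta N) (S.w N) i k₀) * Complex.abs (1 - x N) :=
          mul_le_mul_of_nonneg_left h4 (Complex.abs.nonneg _)
  -- lower bound for |w j - w k₀|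
  have ev_DWj : ∀ᶠ N in atTop, u N/2 ≤ Complex.abs (S.w N j - S.w N k₀) := by
    filter_upwards [hdwu.eventually (eventually_le_nhds (by norm_num : (0:ℝ) < 1/2))]
      with N hN
    have h1 : Complex.abs (S.w N i - S.w N j) ≤ 1/2 * u N := (div_le_iff₀ (hupos N)).1 hN
    have h2 : u N ≤ Complex.abs (S.w N j - S.w N k₀) + Complex.abs (S.w N i - S.w N j) := by
      have e5 : S.w N i - S.w N k₀ = (S.w N j - S.w N k₀) + (S.w N i - S.w N j) := by ring
      calc u N = Complex.abs ((S.w N j - S.w N k₀) + (S.w N i - S.w N j)) := by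
            simp only [hu_def]; rw [← e5]
        _ ≤ _ := Complex.abs.add_le _ _
    linarith
  -- eventual bounds near i,j vs k₀
  set γi : ℝ := Complex.abs (Lz i) with hγi_def
  set γj : ℝ := Complex.abs (Lz j) with hγj_def
  have hγipos : 0 < γi := Complex.abs.pos hLzi
  have hγjpos : 0 < γj := Complex.abs.pos hLzj
  have habsDZik := tendsto_abs_scaled hapos (tdz i k₀)
  rw [hLzk₀, sub_zero, ← hγi_def] at habsDZik
  have habsDZjk := tendsto_abs_scaled hapos (tdz j k₀)
  rw [hLzk₀, sub_zero, ← hγj_def] at habsDZjk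
  have ev_DZi_low : ∀ᶠ N in atTop, γi/2 ≤ (S.eps N)^2*Complex.abs (S.z N i - S.z N k₀) :=
    habsDZik.eventually (eventually_ge_nhds (by linarith))
  have ev_DZi_up : ∀ᶠ N in atTop, (S.eps N)^2*Complex.abs (S.z N i - S.z N k₀) ≤ 2*γi :=
    habsDZik.eventually (eventually_le_nhds (by linarith))
  have ev_DZj_low : ∀ᶠ N in atTop, γj/2 ≤ (S.eps N)^2*Complex.abs (S.z N j - S.z N k₀) :=
    habsDZjk.eventually (eventually_ge_nhds (by linarith))
  -- eventual bounds for the far bodies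
  have evK : ∀ᶠ N in atTop, ∀ l ∈ sK.erase k₀,
      (Complex.abs (Lw l)/2 ≤ (S.eps N)^2*Complex.abs (S.w N i - S.w N l)
       ∧ Complex.abs (Lw l)/2 ≤ (S.eps N)^2*Complex.abs (S.w N j - S.w N l))
      ∧ (γi/2 ≤ (S.eps N)^2*Complex.abs (S.z N i - S.z N l)
       ∧ γj/2 ≤ (S.eps N)^2*Complex.abs (S.z N j - S.z N l)) := by
    rw [Filter.eventually_all_finset]
    intro l hl
    obtain ⟨hli, hlj⟩ := hls_ne l (Finset.mem_of_mem_erase hl)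
    have hLwl := hLwK l (Finset.mem_of_mem_erase hl) (Finset.mem_erase.1 hl).1
    have hwl : 0 < Complex.abs (Lw l) := Complex.abs.pos hLwl
    have t1 := tendsto_abs_scaled hapos (tdw i l)
    rw [hLwi, zero_sub, Complex.abs.map_neg] at t1
    have t2 := tendsto_abs_scaled hapos (tdw j l)
    rw [hLwj, zero_sub, Complex.abs.map_neg] at t2
    have t3 := tendsto_abs_scaled hapos (tdz i l)
    rw [hLz0 l hli hlj, sub_zero, ← hγi_def] at t3
    have t4 := tendsto_abs_scaled hapos (tdz j l)
    rw [hLz0 l hli hlj, sub_zero, ← hγj_def] at t4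
    exact ((t1.eventually (eventually_ge_nhds (by linarith))).and
      (t2.eventually (eventually_ge_nhds (by linarith)))).and
      ((t3.eventually (eventually_ge_nhds (by linarith))).and
      (t4.eventually (eventually_ge_nhds (by linarith))))
  -- ===== P, Q and the pair identity =====
  set EE : ℕ → ℂ := fun N => 1 - (m i + m j) * (S.delta N i j)^3 with hEE_def
  set Pq : ℕ → ℂ := fun N => ∑ l ∈ sK, m l *
    (Zq (S.delta N) (S.z N) i l - Zq (S.delta N) (S.z N) j l) with hPq_def
  set Qq : ℕ → ℂ := fun N => ∑ l ∈ sK, m l *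
    (Zq (S.delta N) (S.w N) i l - Zq (S.delta N) (S.w N) j l) with hQq_def
  have hsubsum : ∀ (f g : Fin n → ℂ), ∑ l ∈ sK, m l * (f l - g l)
      = ∑ l ∈ sK, m l * f l - ∑ l ∈ sK, m l * g l := by
    intro f g
    rw [← Finset.sum_sub_distrib]
    exact Finset.sum_congr rfl (fun l _ => by ring)
  have hantiW : ∀ N (k l : Fin n), Zq (S.delta N) (S.w N) l k
      = - Zq (S.delta N) (S.w N) k l := by
    intro N k l
    unfold Zq
    rw [S.delta_symm N l k]
    ring
  have hPeq : ∀ N, (S.z N i - S.z N j) * EE N = Pq N := by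
    intro N
    have hi' : S.z N i = m j * Zq (S.delta N) (S.z N) i j
        + ∑ l ∈ sK, m l * Zq (S.delta N) (S.z N) i l := by
      have h0 := S.eq_z N i
      rwa [← Finset.add_sum_erase (univ.erase i)
        (fun l => m l * Zq (S.delta N) (S.z N) i l) hjmem, ← hsK_def] at h0
    have hj' : S.z N j = m i * Zq (S.delta N) (S.z N) j i
        + ∑ l ∈ sK, m l * Zq (S.delta N) (S.z N) j l := by
      have h0 := S.eq_z N j
      rwa [← Finset.add_sum_erase (univ.erase j)
        (fun l => m l * Zq (S.delta N) (S.z N) j l) himem, Finset.erase_right_comm,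
        ← hsK_def] at h0
    rw [hanti N i j] at hj'
    have hZqij : Zq (S.delta N) (S.z N) i j = (S.delta N i j)^3 * (S.z N i - S.z N j) := rfl
    rw [hZqij] at hi' hj'
    simp only [hPq_def, hEE_def]
    rw [hsubsum]
    linear_combination hi' - hj'
  have hQeq : ∀ N, (S.w N i - S.w N j) * EE N = Qq N := by
    intro N
    have hi' : S.w N i = m j * Zq (S.delta N) (S.w N) i j
        + ∑ l ∈ sK, m l * Zq (S.delta N) (S.w N) i l := by
      have h0 := S.eq_w N i
      rwa [← Finset.add_sum_erase (univ.erase i)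
        (fun l => m l * Zq (S.delta N) (S.w N) i l) hjmem, ← hsK_def] at h0
    have hj' : S.w N j = m i * Zq (S.delta N) (S.w N) j i
        + ∑ l ∈ sK, m l * Zq (S.delta N) (S.w N) j l := by
      have h0 := S.eq_w N j
      rwa [← Finset.add_sum_erase (univ.erase j)
        (fun l => m l * Zq (S.delta N) (S.w N) j l) himem, Finset.erase_right_comm,
        ← hsK_def] at h0
    rw [hantiW N i j] at hj'
    have hZqij : Zq (S.delta N) (S.w N) i j = (S.delta N i j)^3 * (S.w N i - S.w N j) := rfl
    rw [hZqij] at hi' hj'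
    simp only [hQq_def, hEE_def]
    rw [hsubsum]
    linear_combination hi' - hj'
  have hPQid : ∀ N, (S.z N i - S.z N j) * Qq N = (S.w N i - S.w N j) * Pq N := by
    intro N
    rw [← hPeq N, ← hQeq N]
    ring
  -- ===== constants =====
  set Ca : ℝ := Real.sqrt (2/γi) with hCa_def
  set Cb : ℝ := Real.sqrt (16/γj) with hCb_def
  set cw : ℝ := Real.sqrt (1/(8*γi^3)) with hcw_def
  have hCa0 : 0 ≤ Ca := Real.sqrt_nonneg _
  have hCb0 : 0 ≤ Cb := Real.sqrt_nonneg _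
  have hcwpos : 0 < cw := by rw [hcw_def]; apply Real.sqrt_pos.2; positivity
  set CP : ℝ := ∑ l ∈ sK.erase k₀, Complex.abs (m l) *
      (Real.sqrt ((2/(γi/2))*(2/(Complex.abs (Lw l)/2))^3)
       + Real.sqrt ((2/(γj/2))*(2/(Complex.abs (Lw l)/2))^3)) with hCP_def
  set CQ : ℝ := ∑ l ∈ sK.erase k₀, Complex.abs (m l) *
      (Real.sqrt ((2/(Complex.abs (Lw l)/2))*(2/(γi/2))^3)
       + Real.sqrt ((2/(Complex.abs (Lw l)/2))*(2/(γj/2))^3)) with hCQ_def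
  have hCP0 : 0 ≤ CP := Finset.sum_nonneg (fun l _ => by positivity)
  have hCQ0 : 0 ≤ CQ := Finset.sum_nonneg (fun l _ => by positivity)
  -- ===== eventual bounds for the far-body sums =====
  have ev_PK : ∀ᶠ N in atTop, Complex.abs (∑ l ∈ sK.erase k₀, m l *
      (Zq (S.delta N) (S.z N) i l - Zq (S.delta N) (S.z N) j l)) ≤ CP*(S.eps N)^4 := by
    filter_upwards [evK] with N hK
    have hE : (0:ℝ) < (S.eps N)^2 := pow_pos (hapos N) 2
    calc Complex.abs (∑ l ∈ sK.erase k₀, m l *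
          (Zq (S.delta N) (S.z N) i l - Zq (S.delta N) (S.z N) j l))
        ≤ ∑ l ∈ sK.erase k₀, Complex.abs (m l *
          (Zq (S.delta N) (S.z N) i l - Zq (S.delta N) (S.z N) j l)) :=
          AbsoluteValue.sum_le _ _ _
      _ ≤ ∑ l ∈ sK.erase k₀, (Complex.abs (m l) *
          (Real.sqrt ((2/(γi/2))*(2/(Complex.abs (Lw l)/2))^3)
           + Real.sqrt ((2/(γj/2))*(2/(Complex.abs (Lw l)/2))^3)))*(S.eps N)^4 := by
          apply Finset.sum_le_sum
          intro l hl
          obtain ⟨⟨hw1, hw2⟩, hz1, hz2⟩ := hK l hl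
          have hli : l ≠ i := (hls_ne l (Finset.mem_of_mem_erase hl)).1
          have hlj : l ≠ j := (hls_ne l (Finset.mem_of_mem_erase hl)).2
          have hLwl : 0 < Complex.abs (Lw l) :=
            Complex.abs.pos (hLwK l (Finset.mem_of_mem_erase hl) (Finset.mem_erase.1 hl).1)
          have hb1 : Complex.abs (Zq (S.delta N) (S.z N) i l)
              ≤ Real.sqrt ((2/(γi/2))*(2/(Complex.abs (Lw l)/2))^3) * ((S.eps N)^2)^2 :=
            K_bound (Complex.abs.pos (dz_ne S N (Ne.symm hli)))
              (Complex.abs.pos (dw_ne S N (Ne.symm hli))) hE (by positivity) (by positivity)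
              (Complex.abs.nonneg _) (abs_Zq_sq S N (Ne.symm hli)) hz1 hw1 rfl
          have hb2 : Complex.abs (Zq (S.delta N) (S.z N) j l)
              ≤ Real.sqrt ((2/(γj/2))*(2/(Complex.abs (Lw l)/2))^3) * ((S.eps N)^2)^2 :=
            K_bound (Complex.abs.pos (dz_ne S N (Ne.symm hlj)))
              (Complex.abs.pos (dw_ne S N (Ne.symm hlj))) hE (by positivity) (by positivity)
              (Complex.abs.nonneg _) (abs_Zq_sq S N (Ne.symm hlj)) hz2 hw2 rfl
          have he4 : ((S.eps N)^2)^2 = (S.eps N)^4 := by ring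
          rw [he4] at hb1 hb2
          calc Complex.abs (m l * (Zq (S.delta N) (S.z N) i l - Zq (S.delta N) (S.z N) j l))
              = Complex.abs (m l) * Complex.abs (Zq (S.delta N) (S.z N) i l
                - Zq (S.delta N) (S.z N) j l) := map_mul _ _ _
            _ ≤ Complex.abs (m l) * (Complex.abs (Zq (S.delta N) (S.z N) i l)
                + Complex.abs (Zq (S.delta N) (S.z N) j l)) :=
                mul_le_mul_of_nonneg_left (abs_sub_le' _ _) (Complex.abs.nonneg _)
            _ ≤ _ := combine_bound (Complex.abs.nonneg _) (Complex.abs.nonneg _)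
                (Complex.abs.nonneg _) (by positivity) hb1 hb2
      _ = CP*(S.eps N)^4 := by rw [hCP_def, ← Finset.sum_mul]
  have ev_QK : ∀ᶠ N in atTop, Complex.abs (∑ l ∈ sK.erase k₀, m l *
      (Zq (S.delta N) (S.w N) i l - Zq (S.delta N) (S.w N) j l)) ≤ CQ*(S.eps N)^4 := by
    filter_upwards [evK] with N hK
    have hE : (0:ℝ) < (S.eps N)^2 := pow_pos (hapos N) 2
    calc Complex.abs (∑ l ∈ sK.erase k₀, m l *
          (Zq (S.delta N) (S.w N) i l - Zq (S.delta N) (S.w N) j l))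
        ≤ ∑ l ∈ sK.erase k₀, Complex.abs (m l *
          (Zq (S.delta N) (S.w N) i l - Zq (S.delta N) (S.w N) j l)) :=
          AbsoluteValue.sum_le _ _ _
      _ ≤ ∑ l ∈ sK.erase k₀, (Complex.abs (m l) *
          (Real.sqrt ((2/(Complex.abs (Lw l)/2))*(2/(γi/2))^3)
           + Real.sqrt ((2/(Complex.abs (Lw l)/2))*(2/(γj/2))^3)))*(S.eps N)^4 := by
          apply Finset.sum_le_sum
          intro l hl
          obtain ⟨⟨hw1, hw2⟩, hz1, hz2⟩ := hK l hl
          have hli : l ≠ i := (hls_ne l (Finset.mem_of_mem_erase hl)).1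
          have hlj : l ≠ j := (hls_ne l (Finset.mem_of_mem_erase hl)).2
          have hLwl : 0 < Complex.abs (Lw l) :=
            Complex.abs.pos (hLwK l (Finset.mem_of_mem_erase hl) (Finset.mem_erase.1 hl).1)
          have hidi : (Complex.abs (Zq (S.delta N) (S.w N) i l))^2 *
              (Complex.abs (S.w N i - S.w N l) * (Complex.abs (S.z N i - S.z N l))^3) = 1 := by
            linear_combination abs_Wq_sq S N (Ne.symm hli)
          have hidj : (Complex.abs (Zq (S.delta N) (S.w N) j l))^2 *
              (Complex.abs (S.w N j - S.w N l) * (Complex.abs (S.z N j - S.z N l))^3) = 1 := by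
            linear_combination abs_Wq_sq S N (Ne.symm hlj)
          have hb1 : Complex.abs (Zq (S.delta N) (S.w N) i l)
              ≤ Real.sqrt ((2/(Complex.abs (Lw l)/2))*(2/(γi/2))^3) * ((S.eps N)^2)^2 :=
            K_bound (Complex.abs.pos (dw_ne S N (Ne.symm hli)))
              (Complex.abs.pos (dz_ne S N (Ne.symm hli))) hE (by positivity) (by positivity)
              (Complex.abs.nonneg _) hidi hw1 hz1 rfl
          have hb2 : Complex.abs (Zq (S.delta N) (S.w N) j l)
              ≤ Real.sqrt ((2/(Complex.abs (Lw l)/2))*(2/(γj/2))^3) * ((S.eps N)^2)^2 :=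
            K_bound (Complex.abs.pos (dw_ne S N (Ne.symm hlj)))
              (Complex.abs.pos (dz_ne S N (Ne.symm hlj))) hE (by positivity) (by positivity)
              (Complex.abs.nonneg _) hidj hw2 hz2 rfl
          have he4 : ((S.eps N)^2)^2 = (S.eps N)^4 := by ring
          rw [he4] at hb1 hb2
          calc Complex.abs (m l * (Zq (S.delta N) (S.w N) i l - Zq (S.delta N) (S.w N) j l))
              = Complex.abs (m l) * Complex.abs (Zq (S.delta N) (S.w N) i l
                - Zq (S.delta N) (S.w N) j l) := map_mul _ _ _
            _ ≤ Complex.abs (m l) * (Complex.abs (Zq (S.delta N) (S.w N) i l)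
                + Complex.abs (Zq (S.delta N) (S.w N) j l)) :=
                mul_le_mul_of_nonneg_left (abs_sub_le' _ _) (Complex.abs.nonneg _)
            _ ≤ _ := combine_bound (Complex.abs.nonneg _) (Complex.abs.nonneg _)
                (Complex.abs.nonneg _) (by positivity) hb1 hb2
      _ = CQ*(S.eps N)^4 := by rw [hCQ_def, ← Finset.sum_mul]
  -- splits
  have hPsplit : ∀ N, Pq N
      = m k₀ * (Zq (S.delta N) (S.z N) i k₀ - Zq (S.delta N) (S.z N) j k₀)
      + ∑ l ∈ sK.erase k₀, m l *
        (Zq (S.delta N) (S.z N) i l - Zq (S.delta N) (S.z N) j l) := by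
    intro N
    simp only [hPq_def]
    exact (Finset.add_sum_erase sK (fun l => m l *
      (Zq (S.delta N) (S.z N) i l - Zq (S.delta N) (S.z N) j l)) hk₀s).symm
  have hQsplit : ∀ N, Qq N
      = m k₀ * (Zq (S.delta N) (S.w N) i k₀ - Zq (S.delta N) (S.w N) j k₀)
      + ∑ l ∈ sK.erase k₀, m l *
        (Zq (S.delta N) (S.w N) i l - Zq (S.delta N) (S.w N) j l) := by
    intro N
    simp only [hQq_def]
    exact (Finset.add_sum_erase sK (fun l => m l *
      (Zq (S.delta N) (S.w N) i l - Zq (S.delta N) (S.w N) j l)) hk₀s).symm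
  -- ===== the final contradiction =====
  have hK₀pos : 0 < Complex.abs (m k₀) * c₄ * cw := by
    have h0 := Complex.abs.pos (hmz k₀)
    positivity
  have hfinal : ∀ᶠ N in atTop,
      Complex.abs (m k₀) * c₄ * cw
        ≤ (2*(b₀+2)*(Complex.abs (m k₀))*(Ca+Cb)/γc) * ((S.eps N)^2/u N)
          + (2*(b₀+2)*CP/γc) * ((S.eps N)^4*(S.eps N*r N))
          + CQ * (S.eps N*r N) := by
    filter_upwards [ev_dz, ev_dw, ev_T, ev_DWj, ev_DZi_low, ev_DZi_up, ev_DZj_low, ev_PK,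
      ev_QK] with N hdzB hdwB hTB hDWjB hDZl hDZu hDZjl hPKB hQKB
    have h1' : Complex.abs (Zq (S.delta N) (S.z N) i k₀) * (r N)^3 ≤ Ca * S.eps N :=
      boundZr (Complex.abs.nonneg _) (Complex.abs.pos (dz_ne S N hik₀)) (hupos N) (hrpos N)
        (hr2 N) (hapos N) hγipos (abs_Zq_sq S N hik₀) hDZl hCa_def
    have h2' : Complex.abs (Zq (S.delta N) (S.z N) j k₀) * (r N)^3 ≤ Cb * S.eps N :=
      boundZr' (Complex.abs.nonneg _) (Complex.abs.pos (dz_ne S N hjk₀)) (hupos N) (hrpos N)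
        (hr2 N) (hapos N) hγjpos (abs_Zq_sq S N hjk₀) hDWjB hDZjl hCb_def
    have h8' : cw * (S.eps N)^3 ≤ Complex.abs (Zq (S.delta N) (S.w N) i k₀) * r N :=
      boundU (Complex.abs.nonneg _) (Complex.abs.pos (dz_ne S N hik₀)) (hupos N) (hrpos N)
        (hr2 N) (hapos N) hγipos (abs_Wq_sq S N hik₀) hDZu hcw_def
    exact final_ineq (hapos N) (hupos N) (hrpos N) (hr2 N) hγcpos hb₀nn hc₄pos hcwpos
      hCa0 hCb0 hCP0 hCQ0 (hPQid N) (hPsplit N) (hQsplit N) h1' h2' hPKB hQKB hdzB hdwB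
      hTB h8'
  have hRHS : Tendsto (fun N => (2*(b₀+2)*(Complex.abs (m k₀))*(Ca+Cb)/γc) * ((S.eps N)^2/u N)
      + (2*(b₀+2)*CP/γc) * ((S.eps N)^4*(S.eps N*r N)) + CQ * (S.eps N*r N)) atTop
      (nhds 0) := by
    have t1 := haou.const_mul (2*(b₀+2)*(Complex.abs (m k₀))*(Ca+Cb)/γc)
    have t2' : Tendsto (fun N => (S.eps N)^4*(S.eps N*r N)) atTop (nhds 0) := by
      have := (S.eps_lim.pow 4).mul har
      simpa using this
    have t2 := t2'.const_mul (2*(b₀+2)*CP/γc)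
    have t3 := har.const_mul CQ
    have := (t1.add t2).add t3
    simpa using this
  obtain ⟨N0, hN1, hN2⟩ := (hfinal.and (hRHS.eventually (eventually_lt_nhds hK₀pos))).exists
  exact absurd hN1 (not_le.2 hN2)



theorem second_rule_of_trace_two_matrices (n : ℕ) (hn : 2 ≤ n) (m : Fin n → ℂ)
    (hm : ∀ I : Finset (Fin n), I.Nonempty → ∑ k ∈ I, m k ≠ 0)
    (S : SingularSeq n m) (A B : Matrix (Fin n) (Fin n) ℕ)
    (hAB : IsZWMatrices S A B) :
    (∀ i j : Fin n, i ≠ j → Matrix.trace A = 2 → A i i = 1 → A j j = 1 →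
      (∀ k l : Fin n, k ≠ l → ¬ ((k = i ∧ l = j) ∨ (k = j ∧ l = i)) → A k l = 0) →
      (∀ k : Fin n, B i k = 0 ∧ B j k = 0) ∧
        (m i ^ 3 + m j ^ 3 ≠ 0 → ((Matrix.trace B : ℕ) : ℤ) ≠ (n : ℤ) - 3)) ∧
    (∀ i j : Fin n, i ≠ j → Matrix.trace B = 2 → B i i = 1 → B j j = 1 →
      (∀ k l : Fin n, k ≠ l → ¬ ((k = i ∧ l = j) ∨ (k = j ∧ l = i)) → B k l = 0) →
      (∀ k : Fin n, A i k = 0 ∧ A j k = 0) ∧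
        (m i ^ 3 + m j ^ 3 ≠ 0 → ((Matrix.trace A : ℕ) : ℤ) ≠ (n : ℤ) - 3)) := by
  constructor
  · intro i j hij htr hii hjj hoff
    exact key hn m hm S A B hAB i j hij htr hii hjj hoff
  · intro i j hij htr hii hjj hoff
    exact key hn m hm S.swap B A hAB.swap i j hij htr hii hjj hoff
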